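/- arXiv:1804.05451 — 2 statements merged into one kernel-verified Lean document; each statement's English description precedes it below -/
import Mathlib

section
/- Let F = ZMod p for a prime p, and let A, B be finite subsets of F^n (functions into F indexed by Fin n). Let a : F^n → ℂ and b : F^n → ℂ be functions supported on A and B respectively with ‖a‖_∞ ≤ 1 and ‖b‖_∞ ≤ 1. Then for every nonzero λ ∈ F, |∑_{x ∈ A} ∑_{y ∈ B} a(x) b(y) e(λ (x·y))| ≤ |A|^{1/2} |B|^{1/2} p^{n/8} (Λ(A) Λ(B))^{1/8}, where e(t) = exp(2πi t/p) applied to the canonical integer representative, x·y = ∑_i x_i y_i, and Λ(S) denotes the additive energy of S, i.e., the number of quadruples (s1,s2,s3,s4) ∈ S^4 with s1 + s2 = s3 + s4. -/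
open Finset

/-- The standard additive character on `ZMod p`. -/
noncomputable def chr (p : ℕ) (t : ZMod p) : ℂ :=
  Complex.exp (2 * Real.pi * Complex.I * t.val / p)

/-- Dot product on `(ZMod p)^n`. -/
def dotp {p n : ℕ} (x y : Fin n → ZMod p) : ZMod p := ∑ i, x i * y i

/-- Additive energy: number of quadruples `(s1,s2,s3,s4) ∈ S^4` with `s1 + s2 = s3 + s4`. -/
def addEnergy {G : Type*} [AddCommGroup G] [DecidableEq G] (S : Finset G) : ℕ :=
  (((S ×ˢ S) ×ˢ (S ×ˢ S)).filter
    (fun q => q.1.1 + q.1.2 = q.2.1 + q.2.2)).card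


open Complex
open scoped Real ComplexConjugate

section chrlem
variable {p : ℕ} [hp : Fact p.Prime]

set_option linter.unusedSectionVars false

lemma chr_nat (a : ℕ) :
    Complex.exp (2 * Real.pi * Complex.I * a / p) =
      Complex.exp (2 * Real.pi * Complex.I * (a % p : ℕ) / p) := by
  have hp0 : (p : ℂ) ≠ 0 := Nat.cast_ne_zero.mpr hp.out.pos.ne'
  conv_lhs => rw [← Nat.mod_add_div a p]
  push_cast
  rw [show (2 * (Real.pi:ℂ) * Complex.I * ((a % p : ℕ) + (p:ℂ) * ((a / p : ℕ) : ℂ)) / p : ℂ)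
      = 2 * Real.pi * Complex.I * (a % p : ℕ) / p + ((a / p : ℕ) : ℂ) * (2 * Real.pi * Complex.I) by
    field_simp]
  rw [Complex.exp_add, Complex.exp_nat_mul, Complex.exp_two_pi_mul_I, one_pow, mul_one]

lemma chr_zero : chr p 0 = 1 := by
  simp [chr]

lemma chr_add (s t : ZMod p) : chr p (s + t) = chr p s * chr p t := by
  unfold chr
  rw [ZMod.val_add, ← chr_nat, ← Complex.exp_add]
  congr 1
  push_cast
  ring

lemma chr_abs (t : ZMod p) : ‖chr p t‖ = 1 := by
  rw [show chr p t = Complex.exp (((2 * Real.pi * t.val / p : ℝ) : ℂ) * Complex.I) by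
    unfold chr; congr 1; push_cast; ring]
  exact Complex.norm_exp_ofReal_mul_I _

lemma chr_ne_zero (t : ZMod p) : chr p t ≠ 0 := Complex.exp_ne_zero _

lemma conj_chr (t : ZMod p) : conj (chr p t) = chr p (-t) := by
  have h1 : chr p t * chr p (-t) = 1 := by
    rw [← chr_add]; simp [chr_zero]
  have h2 : chr p t * conj (chr p t) = 1 := by
    rw [Complex.mul_conj, Complex.normSq_eq_norm_sq, chr_abs]; norm_num
  exact mul_left_cancel₀ (chr_ne_zero t) (h2.trans h1.symm)

lemma chr_one_ne_one : chr p 1 ≠ 1 := by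
  have hp1 : 1 < p := hp.out.one_lt
  intro h
  unfold chr at h
  rw [ZMod.val_one] at h
  obtain ⟨k, hk⟩ := Complex.exp_eq_one_iff.mp h
  have hπ : (Real.pi : ℂ) ≠ 0 := by exact_mod_cast Real.pi_ne_zero
  have hp0 : (p : ℂ) ≠ 0 := Nat.cast_ne_zero.mpr (by omega)
  have h2πI : (2 * (Real.pi:ℂ) * Complex.I) ≠ 0 :=
    mul_ne_zero (mul_ne_zero two_ne_zero hπ) Complex.I_ne_zero
  have hk' : 2 * (Real.pi:ℂ) * Complex.I = k * (2 * Real.pi * Complex.I) * p := by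
    field_simp at hk
    linear_combination (2 * (Real.pi:ℂ) * Complex.I) * hk
  have h2 : (1 : ℂ) = (k * p : ℤ) := by
    push_cast
    exact mul_left_cancel₀ h2πI (by linear_combination hk')
  have h3 : (1 : ℤ) = k * p := by exact_mod_cast h2
  have : (p : ℤ) ∣ 1 := ⟨k, by linarith⟩
  have := Int.le_of_dvd one_pos this
  omega

end chrlem

section dotplem
variable {p n : ℕ}

lemma dotp_zero_left (y : Fin n → ZMod p) : dotp 0 y = 0 := by simp [dotp]
lemma dotp_zero_right (x : Fin n → ZMod p) : dotp x 0 = 0 := by simp [dotp]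
lemma dotp_add_left (x x' y : Fin n → ZMod p) : dotp (x + x') y = dotp x y + dotp x' y := by
  simp [dotp, add_mul, Finset.sum_add_distrib]
lemma dotp_sub_left (x x' y : Fin n → ZMod p) : dotp (x - x') y = dotp x y - dotp x' y := by
  simp [dotp, sub_mul, Finset.sum_sub_distrib]
lemma dotp_add_right (x y y' : Fin n → ZMod p) : dotp x (y + y') = dotp x y + dotp x y' := by
  simp [dotp, mul_add, Finset.sum_add_distrib]
lemma dotp_sub_right (x y y' : Fin n → ZMod p) : dotp x (y - y') = dotp x y - dotp x y' := by
  simp [dotp, mul_sub, Finset.sum_sub_distrib]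
lemma dotp_single (i : Fin n) (v : ZMod p) (w : Fin n → ZMod p) :
    dotp (Pi.single i v) w = v * w i := by
  unfold dotp
  rw [Finset.sum_eq_single i]
  · simp
  · intro j _ hj; simp [Pi.single_apply, hj]
  · simp


end dotplem

section orth
variable {p n : ℕ} [hp : Fact p.Prime]

lemma sum_chr_dot (lam : ZMod p) (hlam : lam ≠ 0) (w : Fin n → ZMod p) :
    ∑ z : Fin n → ZMod p, chr p (lam * dotp z w) =
      if w = 0 then ((p : ℂ)) ^ n else 0 := by
  by_cases hw : w = 0
  · subst hw
    simp only [dotp_zero_right, mul_zero, chr_zero, Finset.sum_const, Finset.card_univ,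
      if_pos rfl, nsmul_eq_mul, mul_one]
    rw [Fintype.card_fun]
    simp [ZMod.card]
  · rw [if_neg hw]
    let ψ : AddChar (Fin n → ZMod p) ℂ :=
      { toFun := fun z => chr p (lam * dotp z w)
        map_zero_eq_one' := by simp [dotp_zero_left, chr_zero]
        map_add_eq_mul' := fun z z' => by
          simp only [dotp_add_left, mul_add, chr_add] }
    have hne : ψ ≠ 0 := by
      obtain ⟨i, hi⟩ : ∃ i, w i ≠ 0 := by
        by_contra hc
        push_neg at hc
        exact hw (funext fun i => hc i)
      rw [← AddChar.one_eq_zero, AddChar.ne_one_iff]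
      refine ⟨Pi.single i ((w i)⁻¹ * lam⁻¹), ?_⟩
      show chr p (lam * dotp (Pi.single i ((w i)⁻¹ * lam⁻¹)) w) ≠ 1
      rw [dotp_single]
      rw [show lam * ((w i)⁻¹ * lam⁻¹ * w i) = 1 by field_simp]
      exact chr_one_ne_one
    have := AddChar.sum_eq_zero_iff_ne_zero.mpr hne
    exact this

end orth

theorem stmt0 (p : ℕ) [Fact p.Prime] (n : ℕ)
    (A B : Finset (Fin n → ZMod p))
    (a b : (Fin n → ZMod p) → ℂ)
    (ha_supp : ∀ x ∉ A, a x = 0) (hb_supp : ∀ y ∉ B, b y = 0)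
    (ha : ∀ x, ‖a x‖ ≤ 1) (hb : ∀ y, ‖b y‖ ≤ 1)
    (lam : ZMod p) (hlam : lam ≠ 0) :
    ‖∑ x ∈ A, ∑ y ∈ B, a x * b y * chr p (lam * dotp x y)‖ ≤
      (A.card : ℝ) ^ ((1 : ℝ)/2) * (B.card : ℝ) ^ ((1 : ℝ)/2) *
        (p : ℝ) ^ ((n : ℝ)/8) *
        ((addEnergy A : ℝ) * (addEnergy B : ℝ)) ^ ((1 : ℝ)/8) := by
  classical
  set V : (Fin n → ZMod p) → ℂ := fun y => ∑ x ∈ A, a x * chr p (lam * dotp x y) with hVdef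
  set K : (Fin n → ZMod p) → ℂ := fun z => ∑ y ∈ B, chr p (lam * dotp z y) with hKdef
  set SAbs : ℝ := ‖∑ x ∈ A, ∑ y ∈ B, a x * b y * chr p (lam * dotp x y)‖ with hSdef
  set P : ℝ := ∑ y ∈ B, ‖V y‖ with hPdef
  set W : ℝ := ∑ y ∈ B, ‖V y‖ ^ 2 with hWdef
  set N : ℝ := ∑ q ∈ A ×ˢ A, ‖K (q.1 - q.2)‖ with hNdef
  set M : ℝ := ∑ q ∈ A ×ˢ A, ‖K (q.1 - q.2)‖ ^ 2 with hMdef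
  set T : ℝ := ∑ z : Fin n → ZMod p, (‖K z‖ ^ 2) ^ 2 with hTdef
  -- Step 1
  have hS1 : SAbs ≤ P := by
    rw [hSdef, Finset.sum_comm]
    refine le_trans (norm_sum_le _ _) (Finset.sum_le_sum fun y _ => ?_)
    have h1 : ∑ x ∈ A, a x * b y * chr p (lam * dotp x y) = b y * V y := by
      rw [hVdef, Finset.mul_sum]
      exact Finset.sum_congr rfl fun x _ => by ring
    rw [h1, norm_mul]
    have h2 : ‖b y‖ ≤ 1 := hb y
    calc ‖b y‖ * ‖V y‖ ≤ 1 * ‖V y‖ :=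
          mul_le_mul_of_nonneg_right h2 (norm_nonneg _)
      _ = ‖V y‖ := one_mul _
  -- Step 2
  have hCS1 : P ^ 2 ≤ (B.card : ℝ) * W := by
    have := Finset.sum_mul_sq_le_sq_mul_sq B (fun _ => (1:ℝ)) (fun y => ‖V y‖)
    simpa [hPdef, hWdef] using this
  -- Step 3
  have hW : ((W : ℝ) : ℂ) = ∑ q ∈ A ×ˢ A, (a q.1 * conj (a q.2)) * K (q.1 - q.2) := by
    rw [Finset.sum_product, hWdef]
    push_cast
    calc ∑ y ∈ B, ((‖V y‖ : ℝ) : ℂ) ^ 2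
        = ∑ y ∈ B, V y * conj (V y) := by
          refine Finset.sum_congr rfl fun y _ => ?_
          rw [Complex.mul_conj, Complex.normSq_eq_norm_sq]
          push_cast
          ring
      _ = ∑ y ∈ B, ∑ x ∈ A, ∑ x' ∈ A, (a x * conj (a x')) * chr p (lam * dotp (x - x') y) := by
          refine Finset.sum_congr rfl fun y _ => ?_
          rw [show conj (V y) = ∑ x' ∈ A, conj (a x') * chr p (-(lam * dotp x' y)) by
            rw [hVdef]; simp only [map_sum, map_mul, conj_chr]]
          rw [hVdef, Finset.sum_mul_sum]
          refine Finset.sum_congr rfl fun x _ => Finset.sum_congr rfl fun x' _ => ?_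
          rw [show lam * dotp (x - x') y = lam * dotp x y + -(lam * dotp x' y) by
            rw [dotp_sub_left]; ring, chr_add]
          ring
      _ = ∑ x ∈ A, ∑ x' ∈ A, (a x * conj (a x')) * K (x - x') := by
          rw [Finset.sum_comm]
          refine Finset.sum_congr rfl fun x _ => ?_
          rw [Finset.sum_comm]
          refine Finset.sum_congr rfl fun x' _ => ?_
          rw [hKdef, ← Finset.mul_sum]
  have hW2 : W ≤ N := by
    have hWnn0 : (0:ℝ) ≤ W := by
      rw [hWdef]; exact Finset.sum_nonneg fun y _ => sq_nonneg _
    have h0 : W = ‖((W : ℝ) : ℂ)‖ := by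
      rw [Complex.norm_of_nonneg hWnn0]
    rw [h0, hW, hNdef]
    refine le_trans (norm_sum_le _ _) (Finset.sum_le_sum fun q _ => ?_)
    rw [norm_mul, norm_mul]
    have h1 : ‖a q.1‖ ≤ 1 := ha q.1
    have h2 : ‖conj (a q.2)‖ ≤ 1 := by
      rw [Complex.norm_conj]; exact ha q.2
    have h3 : ‖a q.1‖ * ‖conj (a q.2)‖ ≤ 1 :=
      mul_le_one₀ h1 (norm_nonneg _) h2
    calc ‖a q.1‖ * ‖conj (a q.2)‖ * ‖K (q.1 - q.2)‖
        ≤ 1 * ‖K (q.1 - q.2)‖ :=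
          mul_le_mul_of_nonneg_right h3 (norm_nonneg _)
      _ = ‖K (q.1 - q.2)‖ := one_mul _
  -- Step 4
  have hCS2 : N ^ 2 ≤ (A.card : ℝ) ^ 2 * M := by
    have := Finset.sum_mul_sq_le_sq_mul_sq (A ×ˢ A) (fun _ => (1:ℝ))
      (fun q => ‖K (q.1 - q.2)‖)
    simp only [one_mul, one_pow] at this
    rw [hNdef, hMdef]
    calc (∑ q ∈ A ×ˢ A, ‖K (q.1 - q.2)‖) ^ 2
        ≤ (∑ _q ∈ A ×ˢ A, (1:ℝ)) * ∑ q ∈ A ×ˢ A, ‖K (q.1 - q.2)‖ ^ 2 := this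
      _ = (A.card : ℝ) ^ 2 * ∑ q ∈ A ×ˢ A, ‖K (q.1 - q.2)‖ ^ 2 := by
          rw [Finset.sum_const, Finset.card_product]
          push_cast
          ring
  -- Step 5: fibers
  set c : (Fin n → ZMod p) → ℕ :=
    fun z => ((A ×ˢ A).filter (fun q => q.1 - q.2 = z)).card with hcdef
  have hM : M = ∑ z : Fin n → ZMod p, (c z : ℝ) * ‖K z‖ ^ 2 := by
    rw [hMdef, ← Finset.sum_fiberwise' (A ×ˢ A) (fun q => q.1 - q.2)
      (fun z => ‖K z‖ ^ 2)]
    refine Finset.sum_congr rfl fun z _ => ?_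
    rw [Finset.sum_const, nsmul_eq_mul, hcdef]
  have hCS3 : M ^ 2 ≤ (∑ z : Fin n → ZMod p, ((c z : ℝ)) ^ 2) * T := by
    rw [hM, hTdef]
    exact Finset.sum_mul_sq_le_sq_mul_sq _ _ _
  -- Step 7: energy count
  have hcE : ∑ z : Fin n → ZMod p, ((c z : ℝ)) ^ 2 = (addEnergy A : ℝ) := by
    have h1 : ∀ z : Fin n → ZMod p, (c z) ^ 2 =
        (((A ×ˢ A) ×ˢ (A ×ˢ A)).filter
          (fun q => q.1.1 - q.1.2 = z ∧ q.2.1 - q.2.2 = z)).card := by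
      intro z
      rw [hcdef, sq, ← Finset.card_product,
        Finset.filter_product (fun u : (Fin n → ZMod p) × (Fin n → ZMod p) => u.1 - u.2 = z)
          (fun u : (Fin n → ZMod p) × (Fin n → ZMod p) => u.1 - u.2 = z)]
    have h2 : (((A ×ˢ A) ×ˢ (A ×ˢ A)).filter
        (fun q => q.1.1 - q.1.2 = q.2.1 - q.2.2)).card
        = ∑ z : Fin n → ZMod p, (((A ×ˢ A) ×ˢ (A ×ˢ A)).filter
          (fun q => q.1.1 - q.1.2 = z ∧ q.2.1 - q.2.2 = z)).card := by
      rw [Finset.card_eq_sum_card_fiberwise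
        (f := fun q => q.1.1 - q.1.2) (t := Finset.univ) (fun _ _ => Finset.mem_univ _)]
      refine Finset.sum_congr rfl fun z _ => ?_
      rw [Finset.filter_filter]
      congr 1
      apply Finset.filter_congr
      intro q _
      constructor
      · rintro ⟨hd, hz⟩
        exact ⟨hz, hd ▸ hz⟩
      · rintro ⟨hz1, hz2⟩
        exact ⟨hz1.trans hz2.symm, hz1⟩
    have h3 : (((A ×ˢ A) ×ˢ (A ×ˢ A)).filter
        (fun q => q.1.1 - q.1.2 = q.2.1 - q.2.2)).card = _root_.addEnergy A := by
      unfold _root_.addEnergy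
      apply Finset.card_nbij' (i := fun q => ((q.1.1, q.2.2), (q.2.1, q.1.2)))
        (j := fun q => ((q.1.1, q.2.2), (q.2.1, q.1.2)))
      · intro q hq
        simp only [Finset.mem_coe, Finset.mem_filter, Finset.mem_product] at hq ⊢
        obtain ⟨⟨⟨h11, h12⟩, h21, h22⟩, hcond⟩ := hq
        refine ⟨⟨⟨h11, h22⟩, h21, h12⟩, ?_⟩
        have := sub_eq_sub_iff_add_eq_add.mp hcond
        linear_combination this
      · intro q hq
        simp only [Finset.mem_coe, Finset.mem_filter, Finset.mem_product] at hq ⊢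
        obtain ⟨⟨⟨h11, h12⟩, h21, h22⟩, hcond⟩ := hq
        refine ⟨⟨⟨h11, h22⟩, h21, h12⟩, ?_⟩
        rw [sub_eq_sub_iff_add_eq_add]
        linear_combination hcond
      · intro q _; rfl
      · intro q _; rfl
    have hnat : ∑ z : Fin n → ZMod p, (c z) ^ 2 = _root_.addEnergy A := by
      rw [Finset.sum_congr rfl fun z _ => h1 z, ← h2, h3]
    rw [← hnat]
    push_cast
    rfl
  -- Step 8: Parseval
  have hT : T = (p : ℝ) ^ n * (addEnergy B : ℝ) := by
    have hC : ((T : ℝ) : ℂ) = (((p : ℝ) ^ n * (addEnergy B : ℝ) : ℝ) : ℂ) := by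
      rw [hTdef]
      push_cast
      calc ∑ z : Fin n → ZMod p, (((‖K z‖ : ℝ) : ℂ) ^ 2) ^ 2
          = ∑ z : Fin n → ZMod p, (K z * K z) * (conj (K z) * conj (K z)) := by
            refine Finset.sum_congr rfl fun z _ => ?_
            have hmc : (K z) * conj (K z) = ((‖K z‖ : ℝ) : ℂ) ^ 2 := by
              rw [Complex.mul_conj, Complex.normSq_eq_norm_sq]
              push_cast
              ring
            calc (((‖K z‖ : ℝ) : ℂ) ^ 2) ^ 2
                = ((K z) * conj (K z)) * ((K z) * conj (K z)) := by rw [hmc]; ring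
              _ = (K z * K z) * (conj (K z) * conj (K z)) := by ring
        _ = ∑ z : Fin n → ZMod p, ∑ w ∈ (B ×ˢ B) ×ˢ (B ×ˢ B),
              chr p (lam * dotp z (w.1.1 + w.1.2 - (w.2.1 + w.2.2))) := by
            refine Finset.sum_congr rfl fun z _ => ?_
            have e1 : K z * K z = ∑ u ∈ B ×ˢ B, chr p (lam * dotp z (u.1 + u.2)) := by
              rw [hKdef]
              simp only
              rw [Finset.sum_mul_sum, Finset.sum_product]
              refine Finset.sum_congr rfl fun y _ => Finset.sum_congr rfl fun y' _ => ?_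
              rw [show lam * dotp z (y + y') = lam * dotp z y + lam * dotp z y' by
                rw [dotp_add_right]; ring, chr_add]
            have e2 : conj (K z) * conj (K z)
                = ∑ v ∈ B ×ˢ B, chr p (-(lam * dotp z (v.1 + v.2))) := by
              rw [show conj (K z) = ∑ y ∈ B, chr p (-(lam * dotp z y)) by
                rw [hKdef]; simp only [map_sum, conj_chr]]
              rw [Finset.sum_mul_sum, Finset.sum_product]
              refine Finset.sum_congr rfl fun y _ => Finset.sum_congr rfl fun y' _ => ?_
              rw [show -(lam * dotp z (y + y')) = -(lam * dotp z y) + -(lam * dotp z y') by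
                rw [dotp_add_right]; ring, chr_add]
            rw [e1, e2, Finset.sum_mul_sum]
            conv_rhs => rw [Finset.sum_product]
            refine Finset.sum_congr rfl fun u _ => Finset.sum_congr rfl fun v _ => ?_
            rw [show lam * dotp z (u.1 + u.2 - (v.1 + v.2))
                = lam * dotp z (u.1 + u.2) + -(lam * dotp z (v.1 + v.2)) by
              rw [dotp_sub_right]; ring, chr_add]
        _ = ∑ w ∈ (B ×ˢ B) ×ˢ (B ×ˢ B),
              (if w.1.1 + w.1.2 - (w.2.1 + w.2.2) = 0 then ((p : ℂ)) ^ n else 0) := by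
            rw [Finset.sum_comm]
            exact Finset.sum_congr rfl fun w _ => sum_chr_dot lam hlam _
        _ = ((p : ℂ)) ^ n * ((addEnergy B : ℕ) : ℂ) := by
            simp only [sub_eq_zero]
            rw [Finset.sum_ite, Finset.sum_const, Finset.sum_const_zero, add_zero,
              nsmul_eq_mul, mul_comm]
            unfold _root_.addEnergy
            norm_num
    exact_mod_cast hC
  -- Step 9: assemble
  have hWnn : 0 ≤ W := by
    rw [hWdef]; exact Finset.sum_nonneg fun y _ => sq_nonneg _
  have hSnn : (0:ℝ) ≤ SAbs := norm_nonneg _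
  have hBnn : (0:ℝ) ≤ (B.card : ℝ) := Nat.cast_nonneg _
  have h12 : SAbs ^ 2 ≤ (B.card : ℝ) * W :=
    le_trans (pow_le_pow_left₀ hSnn hS1 2) hCS1
  have hM2 : M ^ 2 ≤ (addEnergy A : ℝ) * ((p : ℝ) ^ n * (addEnergy B : ℝ)) := by
    rw [← hcE, ← hT]; exact hCS3
  have hW4 : W ^ 4 ≤ (A.card : ℝ) ^ 4 * ((addEnergy A : ℝ) * ((p : ℝ) ^ n * (addEnergy B : ℝ))) := by
    calc W ^ 4 ≤ N ^ 4 := pow_le_pow_left₀ hWnn hW2 4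
      _ = (N ^ 2) ^ 2 := by ring
      _ ≤ ((A.card : ℝ) ^ 2 * M) ^ 2 := pow_le_pow_left₀ (sq_nonneg N) hCS2 2
      _ = (A.card : ℝ) ^ 4 * M ^ 2 := by ring
      _ ≤ (A.card : ℝ) ^ 4 * ((addEnergy A : ℝ) * ((p : ℝ) ^ n * (addEnergy B : ℝ))) := by
          have : (0:ℝ) ≤ (A.card : ℝ) ^ 4 := by positivity
          exact mul_le_mul_of_nonneg_left hM2 this
  have hS8 : SAbs ^ 8 ≤ (A.card : ℝ) ^ 4 * (B.card : ℝ) ^ 4 * (p : ℝ) ^ n *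
      ((addEnergy A : ℝ) * (addEnergy B : ℝ)) := by
    calc SAbs ^ 8 = (SAbs ^ 2) ^ 4 := by ring
      _ ≤ ((B.card : ℝ) * W) ^ 4 := pow_le_pow_left₀ (sq_nonneg _) h12 4
      _ = (B.card : ℝ) ^ 4 * W ^ 4 := by ring
      _ ≤ (B.card : ℝ) ^ 4 *
          ((A.card : ℝ) ^ 4 * ((addEnergy A : ℝ) * ((p : ℝ) ^ n * (addEnergy B : ℝ)))) := by
          have : (0:ℝ) ≤ (B.card : ℝ) ^ 4 := by positivity
          exact mul_le_mul_of_nonneg_left hW4 this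
      _ = (A.card : ℝ) ^ 4 * (B.card : ℝ) ^ 4 * (p : ℝ) ^ n *
          ((addEnergy A : ℝ) * (addEnergy B : ℝ)) := by ring
  -- conclude
  have key : ∀ (x : ℝ), 0 ≤ x → ∀ (r : ℝ) (m : ℕ), r * 8 = (m:ℝ) → (x ^ r) ^ (8:ℕ) = x ^ m := by
    intro x hx r m hrm
    rw [← Real.rpow_natCast (x ^ r) 8, ← Real.rpow_mul hx,
      show r * ((8:ℕ):ℝ) = ((m:ℕ):ℝ) by push_cast; push_cast at hrm; linarith,
      Real.rpow_natCast]
  have hRHSnn : (0:ℝ) ≤ (A.card : ℝ) ^ ((1 : ℝ)/2) * (B.card : ℝ) ^ ((1 : ℝ)/2) *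
      (p : ℝ) ^ ((n : ℝ)/8) * ((addEnergy A : ℝ) * (addEnergy B : ℝ)) ^ ((1 : ℝ)/8) :=
    mul_nonneg (mul_nonneg (mul_nonneg (Real.rpow_nonneg (Nat.cast_nonneg _) _)
      (Real.rpow_nonneg (Nat.cast_nonneg _) _)) (Real.rpow_nonneg (Nat.cast_nonneg _) _))
      (Real.rpow_nonneg (mul_nonneg (Nat.cast_nonneg _) (Nat.cast_nonneg _)) _)
  refine le_of_pow_le_pow_left₀ (n := 8) (by norm_num) hRHSnn ?_
  calc SAbs ^ 8 ≤ (A.card : ℝ) ^ 4 * (B.card : ℝ) ^ 4 * (p : ℝ) ^ n *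
      ((addEnergy A : ℝ) * (addEnergy B : ℝ)) := hS8
    _ = ((A.card : ℝ) ^ ((1 : ℝ)/2) * (B.card : ℝ) ^ ((1 : ℝ)/2) *
        (p : ℝ) ^ ((n : ℝ)/8) * ((addEnergy A : ℝ) * (addEnergy B : ℝ)) ^ ((1 : ℝ)/8)) ^ 8 := by
        rw [mul_pow, mul_pow, mul_pow]
        rw [key _ (Nat.cast_nonneg _) _ 4 (by norm_num),
          key _ (Nat.cast_nonneg _) _ 4 (by norm_num),
          key _ (Nat.cast_nonneg _) ((n:ℝ)/8) n (by field_simp),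
          key _ (mul_nonneg (Nat.cast_nonneg _) (Nat.cast_nonneg _)) ((1:ℝ)/8) 1 (by norm_num), pow_one]
end

section
/- Let F = ZMod p, p ≡ 3 (mod 4) prime, and P_3 = {(x, x·x) : x ∈ F^2} ⊆ F^3. Then the additive energy of the full paraboloid satisfies Λ(P_3) ≤ (p+1) * p^3. In particular Λ(P_3) ≤ 2 p^4 = 2 |P_3|^2. -/
open Finset

def parab3 (p : ℕ) [NeZero p] : Finset ((Fin 2 → ZMod p) × ZMod p) :=
  Finset.univ.image (fun x : Fin 2 → ZMod p => (x, dotp x x))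

section aux

variable {p : ℕ} [Fact p.Prime]

private lemma cnt (hp2 : p ≠ 2) (c : ZMod p) :
    ((univ.filter fun b : ZMod p => b * b = c).card : ℤ)
      = quadraticChar (ZMod p) c + 1 := by
  have hF : ringChar (ZMod p) ≠ 2 := by rwa [ZMod.ringChar_zmod_n]
  have h := quadraticChar_card_sqrts hF c
  rw [← h]
  congr 1
  rw [Set.toFinset_setOf]
  congr 1
  ext b
  simp [sq]

private lemma fiberA (hp2 : p ≠ 2) (f : ZMod p → ℤ) :
    ∑ a : ZMod p, f (a * a)
      = ∑ u : ZMod p, (quadraticChar (ZMod p) u + 1) * f u := by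
  have h1 : ∀ u : ZMod p,
      ∑ a ∈ univ.filter (fun a : ZMod p => a * a = u), f (a * a)
        = (quadraticChar (ZMod p) u + 1) * f u := by
    intro u
    rw [Finset.sum_congr rfl (fun a ha => by rw [(mem_filter.mp ha).2]),
      Finset.sum_const, nsmul_eq_mul, cnt hp2 u]
  calc ∑ a : ZMod p, f (a * a)
      = ∑ u : ZMod p, ∑ a ∈ univ.filter (fun a : ZMod p => a * a = u), f (a * a) :=
        (Finset.sum_fiberwise _ _ _).symm
    _ = _ := Finset.sum_congr rfl fun u _ => h1 u

private lemma lemB (hp2 : p ≠ 2) {c : ZMod p} (hc : c ≠ 0) :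
    ∑ u : ZMod p, quadraticChar (ZMod p) (u * (u + c)) = -1 := by
  have hF : ringChar (ZMod p) ≠ 2 := by rwa [ZMod.ringChar_zmod_n]
  have h0 : quadraticChar (ZMod p) ((0 : ZMod p) * (0 + c)) = 0 := by
    simp
  rw [← Finset.add_sum_erase univ _ (mem_univ (0 : ZMod p)), h0, zero_add]
  have hstep : ∑ u ∈ univ.erase (0 : ZMod p), quadraticChar (ZMod p) (u * (u + c))
      = ∑ v ∈ univ.erase (1 : ZMod p), quadraticChar (ZMod p) v := by
    refine Finset.sum_nbij' (fun u => 1 + c * u⁻¹) (fun v => c * (v - 1)⁻¹)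
      ?_ ?_ ?_ ?_ ?_
    · intro u hu
      have hu0 : u ≠ 0 := by simpa using (Finset.mem_erase.mp hu).1
      refine Finset.mem_erase.mpr ⟨?_, mem_univ _⟩
      intro h
      have : c * u⁻¹ = 0 := by linear_combination h
      rcases mul_eq_zero.mp this with h' | h'
      · exact hc h'
      · exact hu0 (inv_eq_zero.mp h')
    · intro v hv
      have hv1 : v ≠ 1 := by simpa using (Finset.mem_erase.mp hv).1
      refine Finset.mem_erase.mpr ⟨?_, mem_univ _⟩
      intro h
      rcases mul_eq_zero.mp h with h' | h'
      · exact hc h'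
      · exact hv1 (by have := inv_eq_zero.mp h'; linear_combination this)
    · intro u hu
      have hu0 : u ≠ 0 := by simpa using (Finset.mem_erase.mp hu).1
      field_simp
      simp [hc]
    · intro v hv
      have hv1 : v ≠ 1 := by simpa using (Finset.mem_erase.mp hv).1
      have : v - 1 ≠ 0 := sub_ne_zero.mpr hv1
      field_simp
      ring
    · intro u hu
      have hu0 : u ≠ 0 := by simpa using (Finset.mem_erase.mp hu).1
      have key : u * (u + c) = u ^ 2 * (1 + c * u⁻¹) := by
        field_simp
      rw [key, map_mul, quadraticChar_sq_one' hu0, one_mul]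
  rw [hstep]
  have := Finset.add_sum_erase univ (quadraticChar (ZMod p)) (mem_univ (1 : ZMod p))
  rw [quadraticChar_sum_zero hF] at this
  have h1 : quadraticChar (ZMod p) (1 : ZMod p) = 1 := map_one _
  linarith

private lemma lemC (hp3 : p % 4 = 3) (t : ZMod p) :
    ∑ a : ZMod p, quadraticChar (ZMod p) (t - a * a) ≤ 1 := by
  have hp2 : p ≠ 2 := by omega
  have hF : ringChar (ZMod p) ≠ 2 := by rwa [ZMod.ringChar_zmod_n]
  have hneg : quadraticChar (ZMod p) (-1 : ZMod p) = -1 := by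
    refine quadraticChar_neg_one_iff_not_isSquare.mpr ?_
    intro h
    exact (ZMod.exists_sq_eq_neg_one_iff.mp h) hp3
  by_cases ht : t = 0
  · subst ht
    have hle : ∀ a : ZMod p, quadraticChar (ZMod p) (0 - a * a) ≤ 0 := by
      intro a
      have h1 : (0 : ZMod p) - a * a = (-1) * (a * a) := by ring
      rw [h1, map_mul, hneg]
      by_cases ha : a = 0
      · simp [ha]
      · rw [← sq, quadraticChar_sq_one' ha]
        norm_num
    have hnp : ∑ a : ZMod p, quadraticChar (ZMod p) (0 - a * a) ≤ 0 :=
      Finset.sum_nonpos (fun a _ => hle a)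
    linarith
  · have hsplit : ∑ a : ZMod p, quadraticChar (ZMod p) (t - a * a)
        = ∑ u : ZMod p, (quadraticChar (ZMod p) u + 1) * quadraticChar (ZMod p) (t - u) :=
      fiberA hp2 (fun u => quadraticChar (ZMod p) (t - u))
    have hsum2 : ∑ u : ZMod p, quadraticChar (ZMod p) (t - u) = 0 := by
      have hcomp := Equiv.sum_comp (Equiv.subLeft t) (quadraticChar (ZMod p))
      simp only [Equiv.subLeft_apply] at hcomp
      rw [hcomp]
      exact quadraticChar_sum_zero hF
    have hsum1 : ∑ u : ZMod p,
        quadraticChar (ZMod p) u * quadraticChar (ZMod p) (t - u) = 1 := by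
      have heach : ∀ u : ZMod p,
          quadraticChar (ZMod p) u * quadraticChar (ZMod p) (t - u)
            = - quadraticChar (ZMod p) (u * (u + (-t))) := by
        intro u
        rw [← map_mul]
        have h1 : u * (t - u) = (-1) * (u * (u + (-t))) := by ring
        rw [h1, map_mul, hneg]
        ring
      rw [Finset.sum_congr rfl fun u _ => heach u, Finset.sum_neg_distrib,
        lemB hp2 (neg_ne_zero.mpr ht)]
      norm_num
    calc ∑ a : ZMod p, quadraticChar (ZMod p) (t - a * a)
        = ∑ u : ZMod p, (quadraticChar (ZMod p) u + 1) * quadraticChar (ZMod p) (t - u) :=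
          hsplit
      _ = (∑ u : ZMod p, quadraticChar (ZMod p) u * quadraticChar (ZMod p) (t - u))
            + ∑ u : ZMod p, quadraticChar (ZMod p) (t - u) := by
          rw [← Finset.sum_add_distrib]
          exact Finset.sum_congr rfl fun u _ => by ring
      _ ≤ 1 := by rw [hsum1, hsum2]; norm_num

private lemma corePair (hp3 : p % 4 = 3) (t : ZMod p) :
    (univ.filter fun v : ZMod p × ZMod p => v.1 * v.1 + v.2 * v.2 = t).card ≤ p + 1 := by
  have hp2 : p ≠ 2 := by omega
  have hcard : ((univ.filter fun v : ZMod p × ZMod p =>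
      v.1 * v.1 + v.2 * v.2 = t).card : ℤ)
        = ∑ a : ZMod p, (((univ.filter fun b : ZMod p => b * b = t - a * a).card : ℤ)) := by
    rw [Finset.card_filter]
    push_cast
    rw [Fintype.sum_prod_type]
    refine Finset.sum_congr rfl fun a _ => ?_
    rw [Finset.card_filter]
    push_cast
    refine Finset.sum_congr rfl fun b _ => ?_
    congr 1
    simp only [eq_iff_iff]
    constructor
    · intro h; linear_combination h
    · intro h; linear_combination h
  have hz : ((univ.filter fun v : ZMod p × ZMod p =>
      v.1 * v.1 + v.2 * v.2 = t).card : ℤ) ≤ (p : ℤ) + 1 := by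
    rw [hcard]
    have : ∑ a : ZMod p, (((univ.filter fun b : ZMod p => b * b = t - a * a).card : ℤ))
        = ∑ a : ZMod p, (quadraticChar (ZMod p) (t - a * a) + 1) := by
      exact Finset.sum_congr rfl fun a _ => cnt hp2 _
    rw [this, Finset.sum_add_distrib, Finset.sum_const, Finset.card_univ, ZMod.card,
      nsmul_eq_mul, mul_one]
    linarith [lemC hp3 t]
  exact_mod_cast hz

private lemma coreV (hp3 : p % 4 = 3) (t : ZMod p) :
    (univ.filter fun v : Fin 2 → ZMod p => dotp v v = t).card ≤ p + 1 := by
  haveI : NeZero p := ⟨(Fact.out (p := p.Prime)).ne_zero⟩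
  refine le_trans (Finset.card_le_card_of_injOn (fun v => (v 0, v 1)) ?_ ?_) (corePair hp3 t)
  · intro v hv
    simp only [Finset.mem_coe, mem_filter, mem_univ, true_and] at hv ⊢
    rw [← hv]
    simp [dotp, Fin.sum_univ_two]
  · intro v _ v' _ h
    have h0 : v 0 = v' 0 := congrArg Prod.fst h
    have h1 : v 1 = v' 1 := congrArg Prod.snd h
    funext i
    fin_cases i <;> assumption

private lemma fiberBound (hp3 : p % 4 = 3) (w : (Fin 2 → ZMod p) × ZMod p) :
    (((parab3 p) ×ˢ (parab3 p)).filter fun q => q.1 + q.2 = w).card ≤ p + 1 := by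
  haveI : NeZero p := ⟨(Fact.out (p := p.Prime)).ne_zero⟩
  have h2 : (2 : ZMod p) ≠ 0 := by
    intro h
    have h' : ((2 : ℕ) : ZMod p) = 0 := by exact_mod_cast h
    have := (ZMod.natCast_eq_zero_iff 2 p).mp h'
    have hle := Nat.le_of_dvd (by norm_num) this
    omega
  refine le_trans (Finset.card_le_card_of_injOn
    (fun q => (fun i => 2 * q.1.1 i - w.1 i))
    ?_ ?_) (coreV hp3 (2 * w.2 - dotp w.1 w.1))
  · intro q hq
    obtain ⟨hmem, heq⟩ := mem_filter.mp hq
    obtain ⟨hq1, hq2⟩ := mem_product.mp hmem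
    obtain ⟨x, -, hx⟩ := mem_image.mp hq1
    obtain ⟨y, -, hy⟩ := mem_image.mp hq2
    simp only [Finset.mem_coe, mem_filter, mem_univ, true_and]
    rw [← heq, ← hx, ← hy]
    simp only [dotp, Prod.fst_add, Prod.snd_add, Pi.add_apply, Fin.sum_univ_two]
    ring
  · intro q hq q' hq' h
    obtain ⟨hmem, heq⟩ := mem_filter.mp hq
    obtain ⟨hmem', heq'⟩ := mem_filter.mp hq'
    obtain ⟨hq1, -⟩ := mem_product.mp hmem
    obtain ⟨hq1', -⟩ := mem_product.mp hmem'
    obtain ⟨x, -, hx⟩ := mem_image.mp hq1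
    obtain ⟨x', -, hx'⟩ := mem_image.mp hq1'
    have hfst : q.1.1 = q'.1.1 := by
      funext i
      have hi : 2 * q.1.1 i - w.1 i = 2 * q'.1.1 i - w.1 i := congrFun h i
      have : 2 * q.1.1 i = 2 * q'.1.1 i := by linear_combination hi
      exact mul_left_cancel₀ h2 this
    have hq1eq : q.1 = q'.1 := by
      rw [← hx, ← hx'] at hfst ⊢
      simp only at hfst
      rw [hfst]
    have hq2eq : q.2 = q'.2 := by
      have : q.1 + q.2 = q'.1 + q'.2 := by rw [heq, heq']
      rw [hq1eq] at this
      exact add_left_cancel this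
    exact Prod.ext hq1eq hq2eq

private lemma parab3_card : (haveI : NeZero p := ⟨(Fact.out (p := p.Prime)).ne_zero⟩;
    (parab3 p).card) = p ^ 2 := by
  haveI : NeZero p := ⟨(Fact.out (p := p.Prime)).ne_zero⟩
  rw [parab3, Finset.card_image_of_injective _ (fun a b hab => congrArg Prod.fst hab),
    Finset.card_univ]
  simp [ZMod.card]

end aux

theorem stmt14 (p : ℕ) [Fact p.Prime] (hp : p % 4 = 3) :
    _root_.addEnergy (parab3 p) ≤ (p + 1) * p ^ 4 ∧
      _root_.addEnergy (parab3 p) ≤ (p + 1) * (parab3 p).card ^ 2 := by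
  haveI : NeZero p := ⟨(Fact.out (p := p.Prime)).ne_zero⟩
  set S := parab3 p with hS
  have main : _root_.addEnergy S ≤ (p + 1) * S.card ^ 2 := by
    unfold _root_.addEnergy
    rw [Finset.card_eq_sum_card_fiberwise
      (f := Prod.snd) (t := S ×ˢ S)
      (fun x hx => (mem_product.mp (mem_filter.mp hx).1).2)]
    have hb : ∀ b ∈ S ×ˢ S,
        ((((S ×ˢ S) ×ˢ (S ×ˢ S)).filter
          (fun q => q.1.1 + q.1.2 = q.2.1 + q.2.2)).filter
            (fun x => x.2 = b)).card ≤ p + 1 := by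
      intro b _
      refine le_trans (Finset.card_le_card_of_injOn Prod.fst ?_ ?_)
        (fiberBound hp (b.1 + b.2))
      · intro x hx
        obtain ⟨hx1, hx2⟩ := mem_filter.mp hx
        obtain ⟨hx3, hx4⟩ := mem_filter.mp hx1
        refine mem_filter.mpr ⟨(mem_product.mp hx3).1, ?_⟩
        rw [hx4, hx2]
      · intro x hx x' hx' h
        have h2 : x.2 = b := (mem_filter.mp hx).2
        have h2' : x'.2 = b := (mem_filter.mp hx').2
        exact Prod.ext h (h2.trans h2'.symm)
    calc ∑ b ∈ S ×ˢ S, ((((S ×ˢ S) ×ˢ (S ×ˢ S)).filter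
          (fun q => q.1.1 + q.1.2 = q.2.1 + q.2.2)).filter (fun x => x.2 = b)).card
        ≤ ∑ _b ∈ S ×ˢ S, (p + 1) := Finset.sum_le_sum hb
      _ = (S ×ˢ S).card * (p + 1) := by rw [Finset.sum_const, smul_eq_mul]
      _ = (p + 1) * S.card ^ 2 := by rw [Finset.card_product]; ring
  have hcard : S.card = p ^ 2 := parab3_card
  constructor
  · calc _root_.addEnergy S ≤ (p + 1) * S.card ^ 2 := main
      _ = (p + 1) * p ^ 4 := by rw [hcard]; ring
  · exact main
end
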